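/- Let M ⊆ ℂ^N be a set containing p, let M' ⊆ ℂ^{N'} be a generic real-analytic submanifold with p' ∈ M', and let H be a holomorphic map on a neighborhood of p with H(p) = p' and H(M) ⊆ M' near p. Then {v ∈ ℂ^{N'} : there exists a holomorphic map Y near p with Y(p) = 0 such that for every ρ' ∈ I_{p'}(M') and every z ∈ M near p, 2·Re(∂ρ'(H(z)) · Y(z)) + (Dρ')_{H(z)}(v) = 0} is equal to {W(p) : W ∈ 𝔥𝔬𝔩(H)}, where (Dρ')_q(v) denotes the real directional derivative of ρ' at q in the direction v (regarding v ∈ ℂ^{N'} as a vector in ℝ^{2N'}). -/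

import Mathlib

open Complex Topology

noncomputable section

/-- `ℂ^n`. -/
abbrev Cn (n : ℕ) : Type := EuclideanSpace ℂ (Fin n)

/-- `ℝ^m`. -/
abbrev Rm (m : ℕ) : Type := EuclideanSpace ℝ (Fin m)

/-- The vector of `ℂ^n` with entry `c` in the `j`-th coordinate and `0` elsewhere. -/
def cbasis {n : ℕ} (j : Fin n) (c : ℂ) : Cn n := EuclideanSpace.single j c

/-- The `j`-th component of the Wirtinger gradient `∂f(q)` of a real-valued function `f`. -/
def wirtD {n : ℕ} (f : Cn n → ℝ) (q : Cn n) : Fin n → ℂ := fun j =>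
  (1 / 2 : ℂ) * ((fderiv ℝ f q (cbasis j 1) : ℂ)
    - Complex.I * (fderiv ℝ f q (cbasis j Complex.I) : ℂ))

/-- The `j`-th component of `∂̄g(q)` for a complex-valued function `g`. -/
def wirtDBar {n : ℕ} (g : Cn n → ℂ) (q : Cn n) : Fin n → ℂ := fun j =>
  (1 / 2 : ℂ) * (fderiv ℝ g q (cbasis j 1) + Complex.I * fderiv ℝ g q (cbasis j Complex.I))

/-- The `j`-th component of `∂̄f(q)` for a real-valued function `f`. -/
def wirtDBarR {n : ℕ} (f : Cn n → ℝ) (q : Cn n) : Fin n → ℂ := fun j =>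
  (1 / 2 : ℂ) * ((fderiv ℝ f q (cbasis j 1) : ℂ)
    + Complex.I * (fderiv ℝ f q (cbasis j Complex.I) : ℂ))

/-- `M` is a generic real-analytic submanifold of codimension `d` near `p`. -/
def IsGenericAt {n : ℕ} (M : Set (Cn n)) (d : ℕ) (p : Cn n) : Prop :=
  p ∈ M ∧ ∃ (U : Set (Cn n)) (ρ : Cn n → Fin d → ℝ),
    IsOpen U ∧ p ∈ U ∧ (∀ k, AnalyticOnNhd ℝ (fun z => ρ z k) U) ∧
    (M ∩ U = {z | z ∈ U ∧ ∀ k, ρ z k = 0}) ∧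
    ∀ q ∈ M ∩ U, LinearIndependent ℂ (fun k : Fin d => wirtD (fun z => ρ z k) q)

/-- `S` is, near its point `q`, a real-analytic submanifold of (real) dimension `mdim`. -/
def IsRASubmanifoldAt {E : Type*} [NormedAddCommGroup E] [NormedSpace ℝ E]
    (S : Set E) (q : E) (mdim : ℕ) : Prop :=
  ∃ (c : ℕ) (U : Set E) (ρ : E → Fin c → ℝ),
    IsOpen U ∧ q ∈ U ∧ mdim + c = Module.finrank ℝ E ∧
    (∀ k, AnalyticOnNhd ℝ (fun z => ρ z k) U) ∧
    (S ∩ U = {z | z ∈ U ∧ ∀ k, ρ z k = 0}) ∧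
    ∀ x ∈ S ∩ U, LinearIndependent ℝ (fun k : Fin c => fderiv ℝ (fun z => ρ z k) x)

/-- The tangent space of a set at a point: the span of the tangent cone. -/
def tangentSpaceAt {E : Type*} [NormedAddCommGroup E] [NormedSpace ℝ E] (S : Set E) (q : E) :
    Submodule ℝ E := Submodule.span ℝ (tangentConeAt ℝ S q)

/-- Multiplication by `i` on `ℂ^n` as an `ℝ`-linear map. -/
def mulI {n : ℕ} : Cn n →ₗ[ℝ] Cn n :=
  (LinearMap.lsmul ℂ (Cn n) Complex.I).restrictScalars ℝ

/-- `M` (a generic submanifold of codimension `d`, hence of real dimension `2n - d`) is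
minimal at `p`: there is no real-analytic submanifold `S ⊆ M` through `p` of strictly
smaller dimension whose tangent spaces contain the complex tangent spaces of `M`. -/
def IsMinimalAt {n : ℕ} (M : Set (Cn n)) (d : ℕ) (p : Cn n) : Prop :=
  ¬ ∃ (S : Set (Cn n)) (mdim : ℕ), S ⊆ M ∧ p ∈ S ∧ mdim < 2 * n - d ∧
      (∀ q ∈ S, IsRASubmanifoldAt S q mdim) ∧
      ∀ q ∈ S, tangentSpaceAt M q ⊓ (tangentSpaceAt M q).map mulI ≤ tangentSpaceAt S q

/-- A real-analytic CR vector field of `M` near `p`. -/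
structure CRVectorField {N : ℕ} (M : Set (Cn N)) (p : Cn N) where
  coeff : Cn N → Fin N → ℂ
  dom : Set (Cn N)
  isOpen : IsOpen dom
  mem : p ∈ dom
  analytic : ∀ j, AnalyticOnNhd ℝ (fun z => coeff z j) dom
  tangent : ∀ (f : Cn N → ℝ) (U : Set (Cn N)), IsOpen U → p ∈ U → AnalyticOnNhd ℝ f U →
    (∀ z ∈ M ∩ U, f z = 0) →
    ∃ V, IsOpen V ∧ p ∈ V ∧ ∀ z ∈ M ∩ V, (∑ j, coeff z j * wirtDBarR f z j) = 0

/-- Application of a CR vector field to a complex-valued function. -/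
def CRVectorField.apply {N : ℕ} {M : Set (Cn N)} {p : Cn N} (L : CRVectorField M p)
    (g : Cn N → ℂ) : Cn N → ℂ := fun z => ∑ j, L.coeff z j * wirtDBar g z j

/-- Iterated application `L̄₁ ⋯ L̄ₖ g` of a list of CR vector fields. -/
def CRApplyList {N : ℕ} {M : Set (Cn N)} {p : Cn N} (Ls : List (CRVectorField M p))
    (g : Cn N → ℂ) : Cn N → ℂ := Ls.foldr CRVectorField.apply g

/-- `H` is finitely nondegenerate of order at most `ℓ` at `p` (as a map of `M` into `M'`). -/
def FinNondeg {N N' : ℕ} (M : Set (Cn N)) (p : Cn N) (M' : Set (Cn N')) (ℓ : ℕ)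
    (H : Cn N → Cn N') : Prop :=
  Submodule.span ℂ
    { v : Fin N' → ℂ | ∃ (Ls : List (CRVectorField M p)) (ρ' : Cn N' → ℝ) (U' : Set (Cn N')),
        Ls.length ≤ ℓ ∧ IsOpen U' ∧ H p ∈ U' ∧ AnalyticOnNhd ℝ ρ' U' ∧
        (∀ w ∈ M' ∩ U', ρ' w = 0) ∧
        v = fun j => CRApplyList Ls (fun z => wirtD ρ' (H z) j) p } = ⊤

/-- The mapping locus `E_ℓ ⊆ M'`. -/
def MappingLocus {N N' : ℕ} (M : Set (Cn N)) (p : Cn N) (M' : Set (Cn N')) (ℓ : ℕ) :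
    Set (Cn N') :=
  { p' | p' ∈ M' ∧ ∃ (Ω : Set (Cn N)) (H : Cn N → Cn N'),
      IsOpen Ω ∧ p ∈ Ω ∧ DifferentiableOn ℂ H Ω ∧ H p = p' ∧
      (∀ z ∈ M ∩ Ω, H z ∈ M') ∧ FinNondeg M p M' ℓ H }

/-- A semi-analytic subset of a real vector space. -/
def SemiAnalyticSet {E : Type*} [NormedAddCommGroup E] [NormedSpace ℝ E] (A : Set E) : Prop :=
  ∀ x : E, ∃ U : Set E, IsOpen U ∧ x ∈ U ∧
    ∃ (n k : ℕ) (f : Fin n → Fin k → E → ℝ) (iseq : Fin n → Fin k → Bool),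
      (∀ i j, AnalyticOnNhd ℝ (f i j) U) ∧
      A ∩ U = ⋃ i, ⋂ j, {x | x ∈ U ∧ if iseq i j then f i j x = 0 else 0 < f i j x}

/-- `A` is locally semi-analytic along `M'`. -/
def LocallySemiAnalyticOn {E : Type*} [NormedAddCommGroup E] [NormedSpace ℝ E]
    (M' A : Set E) : Prop :=
  ∀ q ∈ M', ∃ U : Set E, IsOpen U ∧ q ∈ U ∧ SemiAnalyticSet (A ∩ U)



private lemma wirt_decomp {n : ℕ} (v : Cn n) :
    v = ∑ j, ((v j).re • cbasis j 1 + (v j).im • cbasis j Complex.I) := by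
  ext i
  have : (∑ j, ((v j).re • cbasis j 1 + (v j).im • cbasis j Complex.I)) i
      = ∑ j, ((v j).re • cbasis j 1 + (v j).im • cbasis j Complex.I) i :=
    by rw [WithLp.ofLp_sum]; exact Finset.sum_apply i _ _
  rw [this]
  simp only [cbasis, PiLp.add_apply, PiLp.smul_apply, EuclideanSpace.single_apply]
  simp [apply_ite Complex.re, apply_ite Complex.im, Complex.ext_iff]

private lemma wirt_key {n : ℕ} (L : Cn n →L[ℝ] ℝ) (v : Cn n) :
    2 * (∑ j, ((1 / 2 : ℂ) * ((L (cbasis j 1) : ℂ)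
      - Complex.I * (L (cbasis j Complex.I) : ℂ)) * v j)).re = L v := by
  conv_rhs => rw [wirt_decomp v, map_sum]
  rw [Complex.re_sum, Finset.mul_sum]
  congr 1; funext j
  simp [Complex.mul_re]
  ring

private lemma two_re_wirtD {n : ℕ} (f : Cn n → ℝ) (q : Cn n) (v : Cn n) :
    2 * (∑ j, wirtD f q j * v j).re = fderiv ℝ f q v :=
  wirt_key (fderiv ℝ f q) v

private lemma sum_mul_add {n : ℕ} (a : Fin n → ℂ) (x y : Cn n) :
    (∑ j, a j * (x + y) j) = (∑ j, a j * x j) + (∑ j, a j * y j) := by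
  rw [← Finset.sum_add_distrib]
  congr 1; funext j
  simp [PiLp.add_apply, mul_add]

private lemma sum_mul_sub {n : ℕ} (a : Fin n → ℂ) (x y : Cn n) :
    (∑ j, a j * (x - y) j) = (∑ j, a j * x j) - (∑ j, a j * y j) := by
  rw [← Finset.sum_sub_distrib]
  congr 1; funext j
  simp [PiLp.sub_apply, mul_sub]

/-- **Corollary 2.12.** The projection to the first factor of the space of infinitesimal
deformations of `H` into the base-point-type deformation of `M'` equals
`𝔥𝔬𝔩(H)(p) = {W(p) : W ∈ 𝔥𝔬𝔩(H)}`. -/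
theorem proj_infinitesimal_deformations_eq_hol_eval
    {N N' d' : ℕ} (M : Set (Cn N)) (p : Cn N) (hpM : p ∈ M)
    (M' : Set (Cn N')) (hM' : ∀ q ∈ M', IsGenericAt M' d' q)
    (p' : Cn N') (hp' : p' ∈ M')
    (H : Cn N → Cn N') (Ω : Set (Cn N)) (hΩ : IsOpen Ω) (hpΩ : p ∈ Ω)
    (hH : DifferentiableOn ℂ H Ω) (hHp : H p = p') (hHM : ∀ z ∈ M ∩ Ω, H z ∈ M') :
    { v : Cn N' | ∃ (ΩY : Set (Cn N)) (Y : Cn N → Cn N'), IsOpen ΩY ∧ p ∈ ΩY ∧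
        DifferentiableOn ℂ Y ΩY ∧ Y p = 0 ∧
        ∀ (ρ' : Cn N' → ℝ) (U' : Set (Cn N')), IsOpen U' → p' ∈ U' →
          AnalyticOnNhd ℝ ρ' U' → (∀ w ∈ M' ∩ U', ρ' w = 0) →
          ∃ V, IsOpen V ∧ p ∈ V ∧ ∀ z ∈ M ∩ V,
            2 * (∑ j, wirtD ρ' (H z) j * Y z j).re + fderiv ℝ ρ' (H z) v = 0 }
    = { c : Cn N' | ∃ (ΩW : Set (Cn N)) (W : Cn N → Cn N'), IsOpen ΩW ∧ p ∈ ΩW ∧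
        DifferentiableOn ℂ W ΩW ∧ W p = c ∧
        ∀ (ρ' : Cn N' → ℝ) (U' : Set (Cn N')), IsOpen U' → p' ∈ U' →
          AnalyticOnNhd ℝ ρ' U' → (∀ w ∈ M' ∩ U', ρ' w = 0) →
          ∃ V, IsOpen V ∧ p ∈ V ∧ ∀ z ∈ M ∩ V,
            (∑ j, wirtD ρ' (H z) j * W z j).re = 0 } := by
  ext v
  simp only [Set.mem_setOf_eq]
  constructor
  · rintro ⟨ΩY, Y, hO, hpY, hdY, hY0, hprop⟩
    refine ⟨ΩY, fun z => Y z + v, hO, hpY, hdY.add_const v, by simp [hY0], ?_⟩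
    intro ρ' U' hU hpU hA hvan
    obtain ⟨V, hV, hpV, heq⟩ := hprop ρ' U' hU hpU hA hvan
    refine ⟨V, hV, hpV, ?_⟩
    intro z hz
    have h := heq z hz
    have hk := two_re_wirtD ρ' (H z) v
    have hs := sum_mul_add (wirtD ρ' (H z)) (Y z) v
    rw [hs, Complex.add_re]
    linarith
  · rintro ⟨ΩW, W, hO, hpW, hdW, hWp, hprop⟩
    refine ⟨ΩW, fun z => W z - v, hO, hpW, hdW.sub_const v, by simp [hWp], ?_⟩
    intro ρ' U' hU hpU hA hvan
    obtain ⟨V, hV, hpV, heq⟩ := hprop ρ' U' hU hpU hA hvan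
    refine ⟨V, hV, hpV, ?_⟩
    intro z hz
    have h := heq z hz
    have hk := two_re_wirtD ρ' (H z) v
    have hs := sum_mul_sub (wirtD ρ' (H z)) (W z) v
    rw [hs, Complex.sub_re]
    linarith

end
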